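/- Classical data-processing for partially smoothed min-entropy under functions: let P_{XY} be a distribution on finite X × Y, f : X → Z a function, and Q_{ZY}(z,y) := ∑_{x : f(x)=z} P_{XY}(x,y). Then H_min^{ε,T}(Z|Ẏ)_Q ≤ H_min^{ε,T}(X|Ẏ)_P, where H_min^{ε,T}(X|Ẏ)_P := sup over sub-normalized P'_{XY} with T(P'_{XY},P_{XY}) ≤ ε and P'_Y ≤ P_Y of −D_max(P'_{XY} ‖ 1_X × P_Y). -/

import Mathlib

open scoped BigOperators
open Classical Real

noncomputable def Tv {α : Type*} [Fintype α] (P Q : α → ℝ) : ℝ :=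
  (1/2) * ∑ x, |P x - Q x| + (1/2) * |∑ x, P x - ∑ x, Q x|

noncomputable def Dmax {α : Type*} [Fintype α] (P R : α → ℝ) : ℝ :=
  Real.logb 2 (sInf {l : ℝ | ∀ x, P x ≤ l * R x})

noncomputable def Ds {α : Type*} [Fintype α] (ε : ℝ) (P R : α → ℝ) : ℝ :=
  sInf {a : ℝ | (∑ x, if (2:ℝ) ^ a * R x < P x then P x else 0) < ε}

noncomputable def Hmin {A Y : Type*} [Fintype A] [Fintype Y] (ε : ℝ) (P : A × Y → ℝ) : ℝ :=
  sSup {h : ℝ | ∃ P' : A × Y → ℝ, (∀ p, 0 ≤ P' p) ∧ (∑ p, P' p ≤ 1) ∧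
    Tv P' P ≤ ε ∧ (∀ y, ∑ a, P' (a, y) ≤ ∑ a, P (a, y)) ∧
    h = - Dmax P' (fun p => ∑ a, P (a, p.2))}

-- every element of the Dmax-set is ≥ c, given a point with mass ≥ c and PY ≤ 1
lemma aux_lb {α Y : Type*} (W : α × Y → ℝ) (PY : Y → ℝ)
    (hPY0 : ∀ y, 0 ≤ PY y) (hPY1 : ∀ y, PY y ≤ 1)
    (c : ℝ) (hc : 0 < c) (p₀ : α × Y) (hp₀ : c ≤ W p₀)
    (l : ℝ) (hl : ∀ p, W p ≤ l * PY p.2) : c ≤ l := by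
  have h1 := hl p₀
  rcases le_or_gt l 0 with h | h
  · have : l * PY p₀.2 ≤ 0 := mul_nonpos_of_nonpos_of_nonneg h (hPY0 _)
    linarith
  · have : l * PY p₀.2 ≤ l * 1 := by
      exact mul_le_mul_of_nonneg_left (hPY1 _) h.le
    linarith

lemma aux_S_nonempty {α Y : Type*} [Fintype α] [Fintype Y] (W : α × Y → ℝ) (PY : Y → ℝ)
    (hW0 : ∀ p, 0 ≤ W p) (hPY0 : ∀ y, 0 ≤ PY y)
    (hvan : ∀ p : α × Y, PY p.2 ≤ 0 → W p = 0) :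
    ∃ l : ℝ, ∀ p : α × Y, W p ≤ l * PY p.2 := by
  refine ⟨∑ p : α × Y, if 0 < PY p.2 then W p / PY p.2 else 0, fun p => ?_⟩
  rcases lt_or_ge 0 (PY p.2) with hp | hp
  · rw [← div_le_iff₀ hp]
    calc W p / PY p.2 = (if 0 < PY p.2 then W p / PY p.2 else 0) := by rw [if_pos hp]
    _ ≤ ∑ q : α × Y, if 0 < PY q.2 then W q / PY q.2 else 0 := by
        apply Finset.single_le_sum (fun q _ => ?_) (Finset.mem_univ p)
        split
        · exact div_nonneg (hW0 q) (by positivity)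
        · exact le_refl 0
  · have h0 : PY p.2 = 0 := le_antisymm hp (hPY0 _)
    rw [hvan p hp, h0, mul_zero]

lemma aux_unbdd {α Y : Type*} [Fintype α] [Fintype Y] (ε : ℝ) (hε : 1 ≤ ε)
    (W : α × Y → ℝ) (hW0 : ∀ p, 0 ≤ W p) (hW1 : ∑ p, W p = 1) :
    ¬ BddAbove {h : ℝ | ∃ W' : α × Y → ℝ, (∀ p, 0 ≤ W' p) ∧ (∑ p, W' p ≤ 1) ∧
      Tv W' W ≤ ε ∧ (∀ y, ∑ a, W' (a, y) ≤ ∑ a, W (a, y)) ∧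
      h = - Dmax W' (fun p => ∑ a, W (a, p.2))} := by
  set PY : Y → ℝ := fun y => ∑ a, W (a, y) with hPYdef
  have hPY0 : ∀ y, 0 ≤ PY y := fun y => Finset.sum_nonneg (fun a _ => hW0 _)
  have hsum' : ∑ y, PY y = 1 := by
    rw [hPYdef, ← hW1, Fintype.sum_prod_type, Finset.sum_comm]
  have hPY1 : ∀ y, PY y ≤ 1 := by
    intro y
    rw [← hsum']
    exact Finset.single_le_sum (fun y _ => hPY0 y) (Finset.mem_univ y)
  have hWle : ∀ p : α × Y, W p ≤ PY p.2 := by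
    intro ⟨a, y⟩
    exact Finset.single_le_sum (f := fun a => W (a, y)) (fun a _ => hW0 _) (Finset.mem_univ a)
  have hp₀ : ∃ p₀ : α × Y, 0 < W p₀ := by
    by_contra hcon
    push_neg at hcon
    have : ∑ p, W p ≤ 0 := Finset.sum_nonpos (fun p _ => hcon p)
    linarith
  obtain ⟨p₀, hp₀⟩ := hp₀
  rintro ⟨M, hM⟩
  set δ : ℝ := (2:ℝ) ^ (-(|M|+1)) with hδdef
  have hδpos : 0 < δ := Real.rpow_pos_of_pos (by norm_num) _
  have hδ1 : δ ≤ 1 := Real.rpow_le_one_of_one_le_of_nonpos (by norm_num)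
    (by nlinarith [abs_nonneg M])
  -- the witness
  set W' : α × Y → ℝ := fun p => δ * W p with hW'def
  have hmem : (- Dmax W' (fun p => ∑ a, W (a, p.2))) ∈ {h : ℝ | ∃ W' : α × Y → ℝ,
      (∀ p, 0 ≤ W' p) ∧ (∑ p, W' p ≤ 1) ∧
      Tv W' W ≤ ε ∧ (∀ y, ∑ a, W' (a, y) ≤ ∑ a, W (a, y)) ∧
      h = - Dmax W' (fun p => ∑ a, W (a, p.2))} := by
    refine ⟨W', fun p => mul_nonneg hδpos.le (hW0 p), ?_, ?_, ?_, rfl⟩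
    · rw [hW'def, ← Finset.mul_sum, hW1, mul_one]; exact hδ1
    · have habs : ∀ p : α × Y, |W' p - W p| = (1 - δ) * W p := by
        intro p
        show |δ * W p - W p| = (1 - δ) * W p
        rw [abs_of_nonpos (by nlinarith [hW0 p, hδ1])]
        ring
      have h2 : ∑ p : α × Y, W' p = δ := by
        rw [hW'def, ← Finset.mul_sum, hW1, mul_one]
      rw [Tv]
      simp only [habs, h2, hW1, ← Finset.mul_sum]
      rw [abs_of_nonpos (by linarith)]
      linarith
    · intro y
      rw [hW'def, ← Finset.mul_sum]
      have : ∑ a, W (a, y) = PY y := rfl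
      nlinarith [hPY0 y, hPY1 y]
  have hDmax : - Dmax W' (fun p => ∑ a, W (a, p.2)) ≥ |M| + 1 := by
    have hδS : ∀ p : α × Y, W' p ≤ δ * PY p.2 := by
      intro p
      exact mul_le_mul_of_nonneg_left (hWle p) hδpos.le
    have hlb : ∀ l ∈ {l : ℝ | ∀ p : α × Y, W' p ≤ l * PY p.2}, δ * W p₀ ≤ l := by
      intro l hl
      exact aux_lb W' PY hPY0 hPY1 (δ * W p₀) (by positivity) p₀ (le_of_eq rfl) l hl
    have h2 : sInf {l : ℝ | ∀ p : α × Y, W' p ≤ l * PY p.2} ≤ δ :=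
      csInf_le ⟨δ * W p₀, hlb⟩ hδS
    have h3 : (0:ℝ) < sInf {l : ℝ | ∀ p : α × Y, W' p ≤ l * PY p.2} :=
      lt_of_lt_of_le (by positivity) (le_csInf ⟨δ, hδS⟩ hlb)
    have h4 : Dmax W' (fun p => ∑ a, W (a, p.2)) ≤ Real.logb 2 δ := by
      rw [Dmax]
      exact (Real.logb_le_logb (by norm_num) h3 hδpos).mpr h2
    have h5 : Real.logb 2 δ = -(|M|+1) := Real.logb_rpow (by norm_num) (by norm_num)
    linarith
  have := hM hmem
  have : |M| ≤ M := by linarith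
  nlinarith [abs_nonneg M, le_abs_self M]

lemma aux_tv_lb {α : Type*} [Fintype α] (W' W : α → ℝ) (h1 : ∑ x, W x = 1) :
    1 - ∑ x, W' x ≤ Tv W' W := by
  rw [Tv, h1]
  have h2 : |∑ x, W' x - 1| ≤ ∑ x, |W' x - W x| := by
    calc |∑ x, W' x - 1| = |∑ x, (W' x - W x)| := by rw [Finset.sum_sub_distrib, h1]
    _ ≤ ∑ x, |W' x - W x| := Finset.abs_sum_le_sum_abs _ _
  have h3 : 1 - ∑ x, W' x ≤ |∑ x, W' x - 1| := by rw [abs_sub_comm]; exact le_abs_self _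
  linarith


theorem stmt8 {X Y Z : Type*} [Fintype X] [Fintype Y] [Fintype Z]
    (P : X × Y → ℝ) (f : X → Z) (ε : ℝ)
    (hP : ∀ p, 0 ≤ P p) (hP1 : ∑ p, P p = 1)
    (hε0 : 0 ≤ ε) (hε1 : ε ≤ 1) :
    Hmin ε (fun q : Z × Y => ∑ x, if f x = q.1 then P (x, q.2) else 0)
      ≤ Hmin ε P := by
  set Qf : Z × Y → ℝ := fun q => ∑ x, if f x = q.1 then P (x, q.2) else 0 with hQfdef
  have hQf0 : ∀ q, 0 ≤ Qf q := by
    intro q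
    apply Finset.sum_nonneg
    intro x _
    split
    · exact hP _
    · exact le_refl 0
  have hfiber : ∀ g : X → ℝ, ∑ z : Z, ∑ x : X, (if f x = z then g x else 0) = ∑ x, g x := by
    intro g
    rw [Finset.sum_comm]
    simp [Finset.sum_ite_eq]
  have hQfY : ∀ y, ∑ z, Qf (z, y) = ∑ x, P (x, y) := fun y => hfiber (fun x => P (x, y))
  have hQf1 : ∑ q, Qf q = 1 := by
    rw [Fintype.sum_prod_type, Finset.sum_comm]
    simp only [hQfY]
    rw [← hP1, Fintype.sum_prod_type, Finset.sum_comm]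
  rcases le_or_gt 1 ε with hε | hε
  · rw [Hmin, Hmin, Real.sSup_of_not_bddAbove (aux_unbdd ε hε Qf hQf0 hQf1),
      Real.sSup_of_not_bddAbove (aux_unbdd ε hε P hP hP1)]
  -- now ε < 1
  set PY : Y → ℝ := fun y => ∑ x, P (x, y) with hPYdef
  have hPY0 : ∀ y, 0 ≤ PY y := fun y => Finset.sum_nonneg (fun x _ => hP _)
  have hPYsum : ∑ y, PY y = 1 := by
    rw [hPYdef, ← hP1, Fintype.sum_prod_type, Finset.sum_comm]
  have hPY1 : ∀ y, PY y ≤ 1 := by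
    intro y
    rw [← hPYsum]
    exact Finset.single_le_sum (fun y _ => hPY0 y) (Finset.mem_univ y)
  have huniv : (Finset.univ : Finset (X × Y)).Nonempty := by
    by_contra hcon
    rw [Finset.not_nonempty_iff_eq_empty] at hcon
    rw [hcon, Finset.sum_empty] at hP1
    norm_num at hP1
  obtain ⟨p₁, -⟩ := id huniv
  set N : ℝ := (Fintype.card (X × Y) : ℝ) with hNdef
  have hN0 : 0 < N := by
    rw [hNdef]
    exact_mod_cast Fintype.card_pos_iff.mpr ⟨p₁⟩
  set c : ℝ := (1 - ε) / N with hcdef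
  have hc0 : 0 < c := div_pos (by linarith) hN0
  -- B is bounded above
  have hBdd : BddAbove {h : ℝ | ∃ P' : X × Y → ℝ, (∀ p, 0 ≤ P' p) ∧ (∑ p, P' p ≤ 1) ∧
      Tv P' P ≤ ε ∧ (∀ y, ∑ a, P' (a, y) ≤ ∑ a, P (a, y)) ∧
      h = - Dmax P' (fun p => ∑ a, P (a, p.2))} := by
    refine ⟨max 0 (- Real.logb 2 c), ?_⟩
    rintro h ⟨P'', h0, h1, hTv, hmarg, heq⟩
    have hs : 1 - ε ≤ ∑ p, P'' p := by
      have := aux_tv_lb P'' P hP1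
      linarith
    have hp₀ : ∃ p₀ : X × Y, c ≤ P'' p₀ := by
      have hconst : ∑ _p : X × Y, c ≤ ∑ p, P'' p := by
        rw [Finset.sum_const, nsmul_eq_mul]
        have : ((Finset.univ : Finset (X × Y)).card : ℝ) * c = 1 - ε := by
          rw [Finset.card_univ, ← hNdef, hcdef]
          field_simp
        linarith
      obtain ⟨p₀, _, hp₀⟩ := Finset.exists_le_of_sum_le huniv hconst
      exact ⟨p₀, hp₀⟩
    obtain ⟨p₀, hp₀⟩ := hp₀
    have hDset : Dmax P'' (fun p => ∑ a, P (a, p.2)) =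
        Real.logb 2 (sInf {l : ℝ | ∀ p : X × Y, P'' p ≤ l * PY p.2}) := rfl
    rcases Set.eq_empty_or_nonempty {l : ℝ | ∀ p : X × Y, P'' p ≤ l * PY p.2} with hS | hS
    · rw [heq, hDset, hS, Real.sInf_empty, Real.logb_zero, neg_zero]
      exact le_max_left _ _
    · have hlow : ∀ l ∈ {l : ℝ | ∀ p : X × Y, P'' p ≤ l * PY p.2}, c ≤ l :=
        fun l hl => aux_lb P'' PY hPY0 hPY1 c hc0 p₀ hp₀ l hl
      have hinf : c ≤ sInf {l : ℝ | ∀ p : X × Y, P'' p ≤ l * PY p.2} := le_csInf hS hlow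
      have : Real.logb 2 c ≤ Real.logb 2 (sInf {l : ℝ | ∀ p : X × Y, P'' p ≤ l * PY p.2}) :=
        (Real.logb_le_logb (by norm_num) hc0 (lt_of_lt_of_le hc0 hinf)).mpr hinf
      rw [heq, hDset]
      refine le_trans (by linarith) (le_max_right _ _)
  -- A is nonempty
  have hAne : Set.Nonempty {h : ℝ | ∃ Q' : Z × Y → ℝ, (∀ q, 0 ≤ Q' q) ∧ (∑ q, Q' q ≤ 1) ∧
      Tv Q' Qf ≤ ε ∧ (∀ y, ∑ a, Q' (a, y) ≤ ∑ a, Qf (a, y)) ∧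
      h = - Dmax Q' (fun q => ∑ a, Qf (a, q.2))} := by
    refine ⟨- Dmax Qf (fun q => ∑ a, Qf (a, q.2)), Qf, hQf0, le_of_eq hQf1, ?_,
      fun y => le_refl _, rfl⟩
    rw [Tv]
    simp [sub_self]
    exact hε0
  rw [Hmin, Hmin]
  apply csSup_le hAne
  rintro h ⟨Q', hQ'0, hQ'1, hTv, hmarg, heq⟩
  set P' : X × Y → ℝ := fun p =>
    if 0 < Qf (f p.1, p.2) then Q' (f p.1, p.2) * P p / Qf (f p.1, p.2) else 0 with hP'def
  have hP'0 : ∀ p, 0 ≤ P' p := by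
    intro p
    simp only [hP'def]
    split
    · have h1 := hQ'0 (f p.1, p.2)
      have h2 := hP p
      have h3 := hQf0 (f p.1, p.2)
      positivity
    · exact le_refl 0
  have hPleQf : ∀ p : X × Y, P p ≤ Qf (f p.1, p.2) := by
    intro p
    have h1 : (if f p.1 = f p.1 then P (p.1, p.2) else 0)
        ≤ ∑ x, if f x = f p.1 then P (x, p.2) else 0 :=
      Finset.single_le_sum (f := fun x => if f x = f p.1 then P (x, p.2) else 0)
        (fun x _ => by split; exacts [hP _, le_refl 0]) (Finset.mem_univ p.1)
    simpa using h1
  have hfib0 : ∀ z y, ¬ 0 < Qf (z, y) → ∀ x, f x = z → P (x, y) = 0 := by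
    intro z y hzy x hx
    have h0 : Qf (z, y) = 0 := le_antisymm (not_lt.mp hzy) (hQf0 _)
    simp only [hQfdef] at h0
    have h2 := (Finset.sum_eq_zero_iff_of_nonneg
      (fun x (_ : x ∈ Finset.univ) => by split; exacts [hP _, le_refl 0])).mp h0 x
      (Finset.mem_univ x)
    rwa [if_pos hx] at h2
  have hKF : ∀ z y, ∑ x, (if f x = z then P' (x, y) else 0)
      = if 0 < Qf (z, y) then Q' (z, y) else 0 := by
    intro z y
    by_cases hzy : 0 < Qf (z, y)
    · rw [if_pos hzy]
      have hterm : ∀ x : X, (if f x = z then P' (x, y) else 0)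
          = (Q' (z, y) / Qf (z, y)) * (if f x = z then P (x, y) else 0) := by
        intro x
        by_cases hx : f x = z
        · rw [if_pos hx, if_pos hx]
          simp only [hP'def]
          rw [hx, if_pos hzy]
          ring
        · rw [if_neg hx, if_neg hx, mul_zero]
      rw [Finset.sum_congr rfl (fun x _ => hterm x), ← Finset.mul_sum]
      have hQfzy : ∑ x, (if f x = z then P (x, y) else 0) = Qf (z, y) := rfl
      rw [hQfzy, div_mul_cancel₀ _ (ne_of_gt hzy)]
    · rw [if_neg hzy]
      apply Finset.sum_eq_zero
      intro x _
      by_cases hx : f x = z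
      · rw [if_pos hx]
        simp only [hP'def]
        rw [hx, if_neg hzy]
      · rw [if_neg hx]
  have hKF2 : ∀ z y, ∑ x, (if f x = z then |P' (x, y) - P (x, y)| else 0)
      = if 0 < Qf (z, y) then |Q' (z, y) - Qf (z, y)| else 0 := by
    intro z y
    by_cases hzy : 0 < Qf (z, y)
    · rw [if_pos hzy]
      have hterm : ∀ x : X, (if f x = z then |P' (x, y) - P (x, y)| else 0)
          = |Q' (z, y) / Qf (z, y) - 1| * (if f x = z then P (x, y) else 0) := by
        intro x
        by_cases hx : f x = z
        · rw [if_pos hx, if_pos hx]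
          have h5 : P' (x, y) - P (x, y) = (Q' (z, y) / Qf (z, y) - 1) * P (x, y) := by
            simp only [hP'def]
            rw [hx, if_pos hzy]
            ring
          rw [h5, abs_mul, abs_of_nonneg (hP (x, y))]
        · rw [if_neg hx, if_neg hx, mul_zero]
      rw [Finset.sum_congr rfl (fun x _ => hterm x), ← Finset.mul_sum]
      have hQfzy : ∑ x, (if f x = z then P (x, y) else 0) = Qf (z, y) := rfl
      rw [hQfzy]
      have h6 : |Q' (z, y) / Qf (z, y) - 1| = |Q' (z, y) - Qf (z, y)| / Qf (z, y) := by
        have h7 : Q' (z, y) / Qf (z, y) - 1 = (Q' (z, y) - Qf (z, y)) / Qf (z, y) := by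
          field_simp
        rw [h7, abs_div, abs_of_pos hzy]
      rw [h6, div_mul_cancel₀ _ (ne_of_gt hzy)]
    · rw [if_neg hzy]
      apply Finset.sum_eq_zero
      intro x _
      by_cases hx : f x = z
      · rw [if_pos hx]
        have hPx : P (x, y) = 0 := hfib0 z y hzy x hx
        have hP'x : P' (x, y) = 0 := by
          simp only [hP'def]
          rw [hx, if_neg hzy]
        rw [hPx, hP'x, sub_zero, abs_zero]
      · rw [if_neg hx]
  have hgroup : ∀ g : X × Y → ℝ, ∀ h' : Z × Y → ℝ,
      (∀ z y, ∑ x, (if f x = z then g (x, y) else 0) = h' (z, y)) →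
      ∑ p, g p = ∑ q, h' q := by
    intro g h' hzy
    calc ∑ p : X × Y, g p = ∑ y, ∑ x, g (x, y) := by
          rw [Fintype.sum_prod_type, Finset.sum_comm]
    _ = ∑ y, ∑ z, ∑ x, (if f x = z then g (x, y) else 0) :=
        Finset.sum_congr rfl (fun y _ => (hfiber (fun x => g (x, y))).symm)
    _ = ∑ y, ∑ z, h' (z, y) :=
        Finset.sum_congr rfl (fun y _ => Finset.sum_congr rfl (fun z _ => hzy z y))
    _ = ∑ q : Z × Y, h' q := by
          rw [Fintype.sum_prod_type, Finset.sum_comm]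
  have hsumP' : ∑ p, P' p = ∑ q : Z × Y, (if 0 < Qf q then Q' q else 0) :=
    hgroup P' (fun q => if 0 < Qf q then Q' q else 0) (fun z y => hKF z y)
  have habsP' : ∑ p, |P' p - P p| = ∑ q : Z × Y, (if 0 < Qf q then |Q' q - Qf q| else 0) :=
    hgroup (fun p => |P' p - P p|) (fun q => if 0 < Qf q then |Q' q - Qf q| else 0)
      (fun z y => hKF2 z y)
  set m : ℝ := ∑ q : Z × Y, (if 0 < Qf q then 0 else Q' q) with hmdef
  have hm0 : 0 ≤ m := Finset.sum_nonneg (fun q _ => by split; exacts [le_refl 0, hQ'0 q])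
  have hsplitQ' : ∑ q, Q' q = (∑ q : Z × Y, (if 0 < Qf q then Q' q else 0)) + m := by
    rw [hmdef, ← Finset.sum_add_distrib]
    refine Finset.sum_congr rfl (fun q _ => by split <;> ring)
  have hsplitabs : ∑ q, |Q' q - Qf q|
      = (∑ q : Z × Y, (if 0 < Qf q then |Q' q - Qf q| else 0)) + m := by
    rw [hmdef, ← Finset.sum_add_distrib]
    refine Finset.sum_congr rfl (fun q _ => ?_)
    by_cases hq : 0 < Qf q
    · rw [if_pos hq, if_pos hq, add_zero]
    · rw [if_neg hq, if_neg hq, zero_add]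
      have h0 : Qf q = 0 := le_antisymm (not_lt.mp hq) (hQf0 q)
      rw [h0, sub_zero, abs_of_nonneg (hQ'0 q)]
  have hsum1 : ∑ p, P' p ≤ 1 := by
    rw [hsumP']
    have h8 : ∑ q : Z × Y, (if 0 < Qf q then Q' q else 0) ≤ ∑ q, Q' q :=
      Finset.sum_le_sum (fun q _ => by split; exacts [le_refl _, hQ'0 q])
    linarith
  have hTvP' : Tv P' P ≤ ε := by
    rw [Tv, habsP', hsumP', hP1]
    rw [Tv, hQf1] at hTv
    rw [hsplitabs, hsplitQ'] at hTv
    have habs2 : |(∑ q : Z × Y, (if 0 < Qf q then Q' q else 0)) - 1|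
        ≤ |(∑ q : Z × Y, (if 0 < Qf q then Q' q else 0)) + m - 1| + m := by
      have h3 : (∑ q : Z × Y, (if 0 < Qf q then Q' q else 0)) - 1
          = ((∑ q : Z × Y, (if 0 < Qf q then Q' q else 0)) + m - 1) + (-m) := by ring
      rw [h3]
      refine le_trans (abs_add_le _ _) ?_
      rw [abs_neg, abs_of_nonneg hm0]
    linarith
  have hmargP' : ∀ y, ∑ a, P' (a, y) ≤ ∑ a, P (a, y) := by
    intro y
    have h1 : ∑ x, P' (x, y) = ∑ z, (if 0 < Qf (z, y) then Q' (z, y) else 0) := by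
      rw [← hfiber (fun x => P' (x, y))]
      exact Finset.sum_congr rfl (fun z _ => hKF z y)
    rw [h1]
    have h2 : ∑ z, (if 0 < Qf (z, y) then Q' (z, y) else 0) ≤ ∑ z, Q' (z, y) :=
      Finset.sum_le_sum (fun z _ => by split; exacts [le_refl _, hQ'0 _])
    have h3 := hmarg y
    have h4 : ∑ z, Qf (z, y) = ∑ x, P (x, y) := hQfY y
    linarith
  -- Dmax comparison
  have hvanQ' : ∀ q : Z × Y, PY q.2 ≤ 0 → Q' q = 0 := by
    intro q hq
    have h1 : Q' (q.1, q.2) ≤ ∑ z, Q' (z, q.2) :=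
      Finset.single_le_sum (f := fun z => Q' (z, q.2)) (fun z _ => hQ'0 _)
        (Finset.mem_univ q.1)
    have h2 := hmarg q.2
    have h3 : ∑ z, Qf (z, q.2) = PY q.2 := hQfY q.2
    have h4 := hQ'0 q
    have h5 : Q' q ≤ ∑ z, Q' (z, q.2) := by simpa using h1
    linarith
  obtain ⟨l₀, hl₀⟩ := aux_S_nonempty Q' PY hQ'0 hPY0 hvanQ'
  have hy₀ : ∃ y₀, 0 < PY y₀ := by
    by_contra hcon
    push_neg at hcon
    have h1 : ∑ y, PY y ≤ 0 := Finset.sum_nonpos (fun y _ => hcon y)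
    linarith
  obtain ⟨y₀, hy₀⟩ := hy₀
  have hl0 : ∀ l : ℝ, (∀ q : Z × Y, Q' q ≤ l * PY q.2) → 0 ≤ l := by
    intro l hl
    by_contra hneg
    push_neg at hneg
    have h1 := hl (f p₁.1, y₀)
    have h2 : l * PY y₀ < 0 := mul_neg_of_neg_of_pos hneg hy₀
    have h3 := hQ'0 (f p₁.1, y₀)
    exact absurd (le_trans h3 h1) (not_le.mpr h2)
  have hsub : ∀ l : ℝ, (∀ q : Z × Y, Q' q ≤ l * PY q.2) → (∀ p : X × Y, P' p ≤ l * PY p.2) := by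
    intro l hl p
    simp only [hP'def]
    by_cases hq : 0 < Qf (f p.1, p.2)
    · rw [if_pos hq]
      have h1 : Q' (f p.1, p.2) * P p / Qf (f p.1, p.2) ≤ Q' (f p.1, p.2) := by
        rw [mul_div_assoc]
        exact mul_le_of_le_one_right (hQ'0 _) ((div_le_one hq).mpr (hPleQf p))
      exact le_trans h1 (hl (f p.1, p.2))
    · rw [if_neg hq]
      exact mul_nonneg (hl0 l hl) (hPY0 _)
  have hs' : 1 - ε ≤ ∑ p, P' p := by
    have := aux_tv_lb P' P hP1
    linarith
  have hp₀' : ∃ p, 0 < P' p := by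
    by_contra hcon
    push_neg at hcon
    have h1 : ∑ p, P' p ≤ 0 := Finset.sum_nonpos (fun p _ => hcon p)
    linarith
  obtain ⟨p₀', hp₀'⟩ := hp₀'
  have hSPlb : ∀ l ∈ {l : ℝ | ∀ p : X × Y, P' p ≤ l * PY p.2}, P' p₀' ≤ l :=
    fun l hl => aux_lb P' PY hPY0 hPY1 (P' p₀') hp₀' p₀' (le_refl _) l hl
  have hSPne : Set.Nonempty {l : ℝ | ∀ p : X × Y, P' p ≤ l * PY p.2} := ⟨l₀, hsub l₀ hl₀⟩
  have hinfP : P' p₀' ≤ sInf {l : ℝ | ∀ p : X × Y, P' p ≤ l * PY p.2} := le_csInf hSPne hSPlb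
  have hinfmono : sInf {l : ℝ | ∀ p : X × Y, P' p ≤ l * PY p.2}
      ≤ sInf {l : ℝ | ∀ q : Z × Y, Q' q ≤ l * PY q.2} :=
    csInf_le_csInf ⟨P' p₀', hSPlb⟩ ⟨l₀, hl₀⟩ (fun l hl => hsub l hl)
  have hinfPpos : 0 < sInf {l : ℝ | ∀ p : X × Y, P' p ≤ l * PY p.2} :=
    lt_of_lt_of_le hp₀' hinfP
  have hinfQpos : 0 < sInf {l : ℝ | ∀ q : Z × Y, Q' q ≤ l * PY q.2} :=
    lt_of_lt_of_le hinfPpos hinfmono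
  have hsetQ : {l : ℝ | ∀ x : Z × Y, Q' x ≤ l * ∑ a, Qf (a, x.2)}
      = {l : ℝ | ∀ q : Z × Y, Q' q ≤ l * PY q.2} := by
    simp only [hQfY]
    rfl
  have e2 : Dmax Q' (fun q : Z × Y => ∑ a, Qf (a, q.2))
      = Real.logb 2 (sInf {l : ℝ | ∀ q : Z × Y, Q' q ≤ l * PY q.2}) := by
    rw [Dmax, hsetQ]
  have e1 : Dmax P' (fun p : X × Y => ∑ a, P (a, p.2))
      = Real.logb 2 (sInf {l : ℝ | ∀ p : X × Y, P' p ≤ l * PY p.2}) := rfl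
  have hmemB : - Dmax P' (fun p : X × Y => ∑ a, P (a, p.2)) ∈
      {h : ℝ | ∃ P'' : X × Y → ℝ, (∀ p, 0 ≤ P'' p) ∧ (∑ p, P'' p ≤ 1) ∧
        Tv P'' P ≤ ε ∧ (∀ y, ∑ a, P'' (a, y) ≤ ∑ a, P (a, y)) ∧
        h = - Dmax P'' (fun p => ∑ a, P (a, p.2))} :=
    ⟨P', hP'0, hsum1, hTvP', hmargP', rfl⟩
  have hh' : h ≤ - Dmax P' (fun p : X × Y => ∑ a, P (a, p.2)) := by
    rw [heq, e2, e1]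
    have := (Real.logb_le_logb (b := 2) (by norm_num) hinfPpos hinfQpos).mpr hinfmono
    linarith
  exact le_trans hh' (le_csSup hBdd hmemB)
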